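/- arXiv:2205.12632 — 4 statements merged into one kernel-verified Lean document; each statement's English description precedes it below -/
import Mathlib

section
/- Let n, m be natural numbers, let P be a symmetric invertible real (n+m)×(n+m) matrix (viewed as a block matrix with diagonal blocks of sizes n and m), and let W be a real m×n matrix. Let U be the (n+m)×n matrix obtained by stacking the n×n identity matrix on top of W, let L be the (n+m)×m matrix obtained by stacking Wᵀ on top of −I_m, let P₂₂ denote the lower-right m×m block of P, and let (P⁻¹)₁₁ denote the upper-left n×n block of P⁻¹. Then the primal matrix inequalities [UᵀPU is negative definite and P₂₂ is positive definite] hold if and only if the dual matrix inequalities [LᵀP⁻¹L is positive definite and (P⁻¹)₁₁ is negative definite] hold. -/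
open Matrix

private lemma matrix_inv_neg {k : Type*} [Fintype k] [DecidableEq k]
    (M : Matrix k k ℝ) [Invertible M] : (-M)⁻¹ = -(M⁻¹) :=
  inv_eq_right_inv (by
    rw [neg_mul_neg, mul_nonsing_inv _ (isUnit_det_of_invertible M)])

private lemma dual_core {n m : Type*} [Fintype n] [Fintype m] [DecidableEq n] [DecidableEq m]
    (X : Matrix (n ⊕ m) (n ⊕ m) ℝ)
    (hsymm : X.IsSymm) (hdet : IsUnit X.det)
    (h1 : (-(X.toBlocks₁₁)).PosDef) (h2 : (X.toBlocks₂₂).PosDef) :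
    (X⁻¹.toBlocks₂₂).PosDef ∧ (-(X⁻¹.toBlocks₁₁)).PosDef := by
  set A := X.toBlocks₁₁ with hA
  set B := X.toBlocks₁₂ with hB
  set C := X.toBlocks₂₂ with hC
  have hB' : X.toBlocks₂₁ = Bᵀ := by
    ext i j
    exact (congrFun (congrFun hsymm.eq (Sum.inr i)) (Sum.inl j)).symm
  have hX : X = fromBlocks A B Bᵀ C := by
    rw [← fromBlocks_toBlocks X, hB']
  -- positive definiteness of the two Schur complements
  have hBCB : (B * C⁻¹ * Bᵀ).PosSemidef := by
    have := (h2.inv.posSemidef).mul_mul_conjTranspose_same B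
    rwa [conjTranspose_eq_transpose_of_trivial] at this
  have hnegS : (-(A - B * C⁻¹ * Bᵀ)).PosDef := by
    have : -(A - B * C⁻¹ * Bᵀ) = (-A) + B * C⁻¹ * Bᵀ := by abel
    rw [this]
    exact h1.add_posSemidef hBCB
  letI iA : Invertible A := ((IsUnit.neg_iff _).mp h1.isUnit).invertible
  have hBAB : (Bᵀ * (-A)⁻¹ * B).PosSemidef := by
    have := (h1.inv.posSemidef).conjTranspose_mul_mul_same B
    rwa [conjTranspose_eq_transpose_of_trivial] at this
  have hT : (C - Bᵀ * A⁻¹ * B).PosDef := by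
    have : C - Bᵀ * A⁻¹ * B = C + Bᵀ * (-A)⁻¹ * B := by
      rw [matrix_inv_neg]
      simp [Matrix.mul_neg, Matrix.neg_mul, sub_eq_add_neg]
    rw [this]
    exact h2.add_posSemidef hBAB
  -- invertibility instances
  letI iX : Invertible X := X.invertibleOfIsUnitDet hdet
  letI iC : Invertible C := h2.isUnit.invertible
  letI iS : Invertible (A - B * C⁻¹ * Bᵀ) := ((IsUnit.neg_iff _).mp hnegS.isUnit).invertible
  letI iT : Invertible (C - Bᵀ * A⁻¹ * B) := hT.isUnit.invertible
  letI iS' : Invertible (A - B * ⅟C * Bᵀ) := by rw [invOf_eq_nonsing_inv]; exact iS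
  letI iT' : Invertible (C - Bᵀ * ⅟A * B) := by rw [invOf_eq_nonsing_inv]; exact iT
  letI iX' : Invertible (fromBlocks A B Bᵀ C) := by rw [← hX]; exact iX
  have e1 : X⁻¹ = ⅟(fromBlocks A B Bᵀ C) := by
    rw [invOf_eq_nonsing_inv, ← hX]
  have h11 : X⁻¹.toBlocks₁₁ = (A - B * C⁻¹ * Bᵀ)⁻¹ := by
    rw [e1, invOf_fromBlocks₂₂_eq]
    simp only [toBlocks_fromBlocks₁₁, invOf_eq_nonsing_inv]
  have h22 : X⁻¹.toBlocks₂₂ = (C - Bᵀ * A⁻¹ * B)⁻¹ := by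
    rw [e1, invOf_fromBlocks₁₁_eq]
    simp only [toBlocks_fromBlocks₂₂, invOf_eq_nonsing_inv]
  constructor
  · rw [h22]; exact hT.inv
  · rw [h11, ← matrix_inv_neg]
    exact hnegS.inv



/-- **Dualization lemma** (Lemma 1 of the paper, derived from Lemma 10.2 of
Scherer–Weiland). For a symmetric invertible `(n+m)×(n+m)` real matrix `P` and
a real `m×n` matrix `W`, with `U = [I; W]` and `L = [Wᵀ; -I]`, the primal matrix
inequalities `UᵀPU ≺ 0` and `P₂₂ ≻ 0` hold iff the dual matrix inequalities
`LᵀP⁻¹L ≻ 0` and `(P⁻¹)₁₁ ≺ 0` hold. -/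
theorem dualization_lemma
    (n m : ℕ)
    (P : Matrix (Fin n ⊕ Fin m) (Fin n ⊕ Fin m) ℝ)
    (hPsymm : P.IsSymm)
    (hPinv : IsUnit P.det)
    (W : Matrix (Fin m) (Fin n) ℝ) :
    ((-((fromRows (1 : Matrix (Fin n) (Fin n) ℝ) W)ᵀ * P *
          fromRows (1 : Matrix (Fin n) (Fin n) ℝ) W)).PosDef ∧
        (P.toBlocks₂₂).PosDef) ↔
      (((fromRows Wᵀ (-1 : Matrix (Fin m) (Fin m) ℝ))ᵀ * P⁻¹ *
          fromRows Wᵀ (-1 : Matrix (Fin m) (Fin m) ℝ)).PosDef ∧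
        (-(P⁻¹.toBlocks₁₁)).PosDef) := by
  set Z : Matrix (Fin n ⊕ Fin m) (Fin n ⊕ Fin m) ℝ := fromBlocks 1 0 W 1 with hZ
  set P' : Matrix (Fin n ⊕ Fin m) (Fin n ⊕ Fin m) ℝ := Zᵀ * P * Z with hP'
  have hZdet : Z.det = 1 := by
    rw [hZ, det_fromBlocks_zero₁₂, det_one, det_one, one_mul]
  have hZinv : Z⁻¹ = fromBlocks 1 0 (-W) 1 := by
    apply inv_eq_right_inv
    rw [hZ, fromBlocks_multiply]
    simp [fromBlocks_one]
  have hZTinv : (Zᵀ)⁻¹ = fromBlocks 1 (-Wᵀ) 0 1 := by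
    rw [← transpose_nonsing_inv, hZinv, fromBlocks_transpose]
    simp
  have hP'symm : P'.IsSymm := by
    show P'ᵀ = P'
    rw [hP', Matrix.transpose_mul, Matrix.transpose_mul, transpose_transpose, hPsymm.eq,
      Matrix.mul_assoc]
  have hP'det : IsUnit P'.det := by
    rw [hP', det_mul, det_mul, det_transpose, hZdet]
    simpa using hPinv
  have hPb : P = fromBlocks P.toBlocks₁₁ P.toBlocks₁₂ P.toBlocks₂₁ P.toBlocks₂₂ :=
    (fromBlocks_toBlocks P).symm
  have hP'blocks : P' = fromBlocks
      (P.toBlocks₁₁ + P.toBlocks₁₂ * W + (Wᵀ * P.toBlocks₂₁ + Wᵀ * (P.toBlocks₂₂ * W)))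
      (P.toBlocks₁₂ + Wᵀ * P.toBlocks₂₂)
      (P.toBlocks₂₁ + P.toBlocks₂₂ * W)
      P.toBlocks₂₂ := by
    rw [hP', hZ]; conv_lhs => rw [hPb]
    rw [fromBlocks_transpose, fromBlocks_multiply, fromBlocks_multiply]
    simp [Matrix.mul_add, Matrix.add_mul, Matrix.mul_assoc]
    abel
  have e1 : (fromRows (1 : Matrix (Fin n) (Fin n) ℝ) W)ᵀ * P *
      fromRows (1 : Matrix (Fin n) (Fin n) ℝ) W = P'.toBlocks₁₁ := by
    conv_lhs => rw [hPb]
    rw [transpose_fromRows, Matrix.mul_assoc, fromBlocks_mul_fromRows,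
      fromCols_mul_fromRows, hP'blocks, toBlocks_fromBlocks₁₁]
    simp [Matrix.mul_add, Matrix.mul_assoc]
  have e2 : P.toBlocks₂₂ = P'.toBlocks₂₂ := by
    rw [hP'blocks, toBlocks_fromBlocks₂₂]
  have hQ' : P'⁻¹ = Z⁻¹ * (P⁻¹ * (Zᵀ)⁻¹) := by
    rw [hP', Matrix.mul_inv_rev, Matrix.mul_inv_rev]
  have hQb : P⁻¹ = fromBlocks P⁻¹.toBlocks₁₁ P⁻¹.toBlocks₁₂ P⁻¹.toBlocks₂₁ P⁻¹.toBlocks₂₂ :=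
    (fromBlocks_toBlocks P⁻¹).symm
  have hQ'blocks : P'⁻¹ = fromBlocks
      (P⁻¹.toBlocks₁₁)
      (P⁻¹.toBlocks₁₁ * (-Wᵀ) + P⁻¹.toBlocks₁₂)
      (-W * P⁻¹.toBlocks₁₁ + P⁻¹.toBlocks₂₁)
      (-W * (P⁻¹.toBlocks₁₁ * (-Wᵀ) + P⁻¹.toBlocks₁₂) +
        (P⁻¹.toBlocks₂₁ * (-Wᵀ) + P⁻¹.toBlocks₂₂)) := by
    rw [hQ', hZinv, hZTinv]; conv_lhs => rw [hQb]
    rw [fromBlocks_multiply, fromBlocks_multiply]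
    simp [Matrix.mul_add, Matrix.add_mul, Matrix.mul_assoc]
  have e3 : (fromRows Wᵀ (-1 : Matrix (Fin m) (Fin m) ℝ))ᵀ * P⁻¹ *
      fromRows Wᵀ (-1 : Matrix (Fin m) (Fin m) ℝ) = P'⁻¹.toBlocks₂₂ := by
    conv_lhs => rw [hQb]
    rw [transpose_fromRows, Matrix.mul_assoc, fromBlocks_mul_fromRows,
      fromCols_mul_fromRows, hQ'blocks, toBlocks_fromBlocks₂₂]
    rw [transpose_neg, transpose_one]
    simp [Matrix.mul_add, Matrix.add_mul, Matrix.mul_assoc, Matrix.neg_mul, Matrix.mul_neg]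
    abel
  have e4 : P⁻¹.toBlocks₁₁ = P'⁻¹.toBlocks₁₁ := by
    rw [hQ'blocks, toBlocks_fromBlocks₁₁]
  rw [e1, e2, e3, e4]
  constructor
  · rintro ⟨h1, h2⟩
    exact dual_core P' hP'symm hP'det h1 h2
  · rintro ⟨h1, h2⟩
    have hQ'symm : (P'⁻¹).IsSymm := by
      show (P'⁻¹)ᵀ = P'⁻¹
      rw [transpose_nonsing_inv, hP'symm.eq]
    have hQ'det : IsUnit (P'⁻¹).det := isUnit_nonsing_inv_det _ hP'det
    have := dual_core (P'⁻¹) hQ'symm hQ'det h2 h1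
    rwa [nonsing_inv_nonsing_inv _ hP'det, and_comm] at this
end

section
/- Let n, m, k be natural numbers, let P be a symmetric invertible real (n+m)×(n+m) matrix (block sizes n and m), let W₁ be a real n×k matrix admitting a left inverse W₁† (i.e., a k×n matrix with W₁†W₁ = I_k), and let W₂ be a real m×k matrix. Let D be the (n+m)×m matrix obtained by stacking (W₂W₁†)ᵀ on top of −I_m, and let (P⁻¹)₁₁ denote the upper-left n×n block of P⁻¹. If the dual matrix inequalities [DᵀP⁻¹D is positive definite and (P⁻¹)₁₁ is negative definite] hold, then the primal matrix inequalities hold: the k×k matrix SᵀPS is negative definite, where S is the (n+m)×k matrix obtained by stacking W₁ on top of W₂, and the lower-right m×m block P₂₂ of P is positive definite. -/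
open Matrix

lemma key_dual {ι : Type*} [Fintype ι] (Q : Matrix ι ι ℝ) (hQ : Qᵀ = Q)
    (U V : Submodule ℝ (ι → ℝ))
    (hdim : Fintype.card ι ≤ Module.finrank ℝ U + Module.finrank ℝ V)
    (hU : ∀ u ∈ U, u ≠ 0 → 0 < u ⬝ᵥ Q *ᵥ u)
    (hV : ∀ v ∈ V, v ≠ 0 → v ⬝ᵥ Q *ᵥ v < 0)
    (y : ι → ℝ) (hy : y ≠ 0) (horth : ∀ u ∈ U, u ⬝ᵥ Q *ᵥ y = 0) :
    y ⬝ᵥ Q *ᵥ y < 0 := by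
  by_contra hcon
  push_neg at hcon
  have hyU : y ∉ U := fun h => (hU y h hy).ne' (horth y h)
  have hinf : U ⊓ (ℝ ∙ y) = ⊥ := by
    rw [Submodule.eq_bot_iff]
    rintro z ⟨hzU, hzS⟩
    obtain ⟨c, rfl⟩ := Submodule.mem_span_singleton.mp hzS
    rcases eq_or_ne c 0 with rfl | hc
    · simp
    · exact absurd ((Submodule.smul_mem_iff _ hc).mp hzU) hyU
  have hsup : Module.finrank ℝ ↥(U ⊔ (ℝ ∙ y)) = Module.finrank ℝ U + 1 := by
    have := Submodule.finrank_sup_add_finrank_inf_eq U (ℝ ∙ y)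
    rw [hinf, finrank_span_singleton hy] at this
    simpa using this
  set W := U ⊔ (ℝ ∙ y) with hW
  have hcard : Module.finrank ℝ (ι → ℝ) = Fintype.card ι := Module.finrank_fintype_fun_eq_card ℝ
  have hWV : 0 < Module.finrank ℝ ↥(W ⊓ V) := by
    have h1 := Submodule.finrank_sup_add_finrank_inf_eq W V
    have h2 : Module.finrank ℝ ↥(W ⊔ V) ≤ Fintype.card ι := hcard ▸ (W ⊔ V).finrank_le
    omega
  obtain ⟨z, hzWV, hz0⟩ : ∃ z ∈ W ⊓ V, z ≠ 0 := by
    by_contra h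
    push_neg at h
    have : W ⊓ V = ⊥ := (Submodule.eq_bot_iff _).mpr fun z hz => by
      by_contra h0; exact h0 (by simpa using h z hz ▸ rfl)
    rw [this, finrank_bot] at hWV; exact lt_irrefl 0 hWV
  obtain ⟨hzW, hzV⟩ := hzWV
  obtain ⟨u, huU, s, hsS, rfl⟩ := Submodule.mem_sup.mp hzW
  obtain ⟨c, rfl⟩ := Submodule.mem_span_singleton.mp hsS
  have hyQu : (c • y) ⬝ᵥ Q *ᵥ u = u ⬝ᵥ Q *ᵥ (c • y) := by
    rw [dotProduct_mulVec, dotProduct_mulVec, ← hQ, vecMul_transpose, hQ,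
      dotProduct_comm, dotProduct_mulVec]
  have hexp : (u + c • y) ⬝ᵥ Q *ᵥ (u + c • y)
      = u ⬝ᵥ Q *ᵥ u + 2 * (u ⬝ᵥ Q *ᵥ (c • y)) + (c • y) ⬝ᵥ Q *ᵥ (c • y) := by
    rw [mulVec_add, dotProduct_add, add_dotProduct, add_dotProduct, hyQu]; ring
  have h1 : u ⬝ᵥ Q *ᵥ (c • y) = 0 := by
    have := horth u huU
    rw [mulVec_smul, dotProduct_smul, this, smul_zero]
  have h2 : 0 ≤ (c • y) ⬝ᵥ Q *ᵥ (c • y) := by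
    rw [mulVec_smul, dotProduct_smul, smul_dotProduct]
    simpa [mul_assoc] using mul_nonneg (mul_self_nonneg c) hcon
  have h3 : 0 ≤ u ⬝ᵥ Q *ᵥ u := by
    rcases eq_or_ne u 0 with rfl | hu
    · simp
    · exact (hU u huU hu).le
  have := hV _ hzV hz0
  rw [hexp, h1] at this
  linarith


/-- **Modified dualization lemma** (Lemma 2 of the paper). If `W₁` admits a left
inverse `W₁†` and the dual matrix inequalities hold for `D = [(W₂W₁†)ᵀ; -I]`,
then the primal matrix inequalities hold for `S = [W₁; W₂]`. -/
theorem modified_dualization_lemma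
    (n m k : ℕ)
    (P : Matrix (Fin n ⊕ Fin m) (Fin n ⊕ Fin m) ℝ)
    (hPsymm : P.IsSymm)
    (hPinv : IsUnit P.det)
    (W₁ : Matrix (Fin n) (Fin k) ℝ)
    (W₁dag : Matrix (Fin k) (Fin n) ℝ)
    (hleft : W₁dag * W₁ = 1)
    (W₂ : Matrix (Fin m) (Fin k) ℝ)
    (hdual₁ : ((fromRows (W₂ * W₁dag)ᵀ (-1 : Matrix (Fin m) (Fin m) ℝ))ᵀ * P⁻¹ *
        fromRows (W₂ * W₁dag)ᵀ (-1 : Matrix (Fin m) (Fin m) ℝ)).PosDef)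
    (hdual₂ : (-(P⁻¹.toBlocks₁₁)).PosDef) :
    (-((fromRows W₁ W₂)ᵀ * P * fromRows W₁ W₂)).PosDef ∧ (P.toBlocks₂₂).PosDef := by
  set Q := P⁻¹ with hQdef
  have hQsymm : Qᵀ = Q := by
    rw [hQdef, transpose_nonsing_inv, hPsymm.eq]
  have hQP : Q * P = 1 := nonsing_inv_mul P hPinv
  have hPQ : P * Q = 1 := mul_nonsing_inv P hPinv
  set A := (W₂ * W₁dag)ᵀ with hAdef
  set D := fromRows A (-1 : Matrix (Fin m) (Fin m) ℝ) with hDdef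
  set E := fromRows (1 : Matrix (Fin n) (Fin n) ℝ) (0 : Matrix (Fin m) (Fin n) ℝ) with hEdef
  have hDvec : ∀ w, D *ᵥ w = Sum.elim (A *ᵥ w) (-w) := by
    intro w; rw [hDdef, fromRows_mulVec, neg_mulVec, one_mulVec]
  have hEvec : ∀ a, E *ᵥ a = Sum.elim a 0 := by
    intro a; rw [hEdef, fromRows_mulVec]; simp
  have hDinj : Function.Injective D.mulVecLin := by
    rw [← LinearMap.ker_eq_bot, LinearMap.ker_eq_bot']
    intro w hw
    rw [mulVecLin_apply, hDvec] at hw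
    funext j
    simpa using congrFun hw (Sum.inr j)
  have hEinj : Function.Injective E.mulVecLin := by
    rw [← LinearMap.ker_eq_bot, LinearMap.ker_eq_bot']
    intro a ha
    rw [mulVecLin_apply, hEvec] at ha
    funext i
    simpa using congrFun ha (Sum.inl i)
  set U := LinearMap.range D.mulVecLin with hUdef
  set V := LinearMap.range E.mulVecLin with hVdef
  have hUrank : Module.finrank ℝ U = m := by
    rw [hUdef, LinearMap.finrank_range_of_inj hDinj, Module.finrank_fintype_fun_eq_card]
    simp
  have hVrank : Module.finrank ℝ V = n := by
    rw [hVdef, LinearMap.finrank_range_of_inj hEinj, Module.finrank_fintype_fun_eq_card]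
    simp
  -- positivity of Q on U
  have hU : ∀ u ∈ U, u ≠ 0 → 0 < u ⬝ᵥ Q *ᵥ u := by
    rintro u ⟨w, rfl⟩ hu
    rw [mulVecLin_apply] at hu ⊢
    have hw : w ≠ 0 := by rintro rfl; exact hu (by simp)
    have := hdual₁.dotProduct_mulVec_pos hw
    have heq : star w ⬝ᵥ (Dᵀ * Q * D) *ᵥ w = (D *ᵥ w) ⬝ᵥ Q *ᵥ (D *ᵥ w) := by
      rw [show star w = w from star_trivial w, ← mulVec_mulVec, ← mulVec_mulVec,
        dotProduct_mulVec w Dᵀ, vecMul_transpose]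
    rw [heq] at this
    exact this
  -- negativity of Q on V
  have hQblock : ∀ a : Fin n → ℝ, (Sum.elim a 0 : Fin n ⊕ Fin m → ℝ) ⬝ᵥ Q *ᵥ (Sum.elim a 0)
      = a ⬝ᵥ Q.toBlocks₁₁ *ᵥ a := by
    intro a
    simp [dotProduct, mulVec, Fintype.sum_sum_type, toBlocks₁₁]
  have hV : ∀ v ∈ V, v ≠ 0 → v ⬝ᵥ Q *ᵥ v < 0 := by
    rintro v ⟨a, rfl⟩ hv
    rw [mulVecLin_apply, hEvec] at hv ⊢
    have ha : a ≠ 0 := by rintro rfl; exact hv (by ext (i|j) <;> simp)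
    have h0 := hdual₂.dotProduct_mulVec_pos ha
    rw [show star a = a from star_trivial a] at h0
    have h1 : a ⬝ᵥ Q.toBlocks₁₁ *ᵥ a < 0 := by
      have : (0:ℝ) < a ⬝ᵥ -(Q.toBlocks₁₁ *ᵥ a) := by rwa [← neg_mulVec]
      simpa using this
    rw [hQblock]; exact h1
  have hdim : Fintype.card (Fin n ⊕ Fin m) ≤ Module.finrank ℝ U + Module.finrank ℝ V := by
    rw [hUrank, hVrank]; simp [add_comm]
  -- general fact: Q *ᵥ (P *ᵥ x) = x
  have hQPvec : ∀ x, Q *ᵥ (P *ᵥ x) = x := by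
    intro x; rw [mulVec_mulVec, hQP, one_mulVec]
  constructor
  · rw [posDef_iff_dotProduct_mulVec]; constructor
    · have hMsym : ((fromRows W₁ W₂)ᵀ * P * fromRows W₁ W₂)ᵀ
          = (fromRows W₁ W₂)ᵀ * P * fromRows W₁ W₂ := by
        rw [transpose_mul, transpose_mul, transpose_transpose, hPsymm.eq, Matrix.mul_assoc]
      rw [Matrix.IsHermitian]
      ext i j
      simp only [conjTranspose_apply, Matrix.neg_apply, star_trivial, neg_inj]
      have := congrFun (congrFun hMsym i) j
      rw [transpose_apply] at this
      exact this
    · intro v hv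
      rw [show star v = v from star_trivial v]
      set S := fromRows W₁ W₂ with hSdef
      set x := S *ᵥ v with hxdef
      have hxelim : x = Sum.elim (W₁ *ᵥ v) (W₂ *ᵥ v) := by
        rw [hxdef, hSdef, fromRows_mulVec]
      have hx0 : x ≠ 0 := by
        intro h
        apply hv
        have h1 : W₁ *ᵥ v = 0 := by
          funext i; simpa using congrFun (hxelim ▸ h : Sum.elim (W₁ *ᵥ v) (W₂ *ᵥ v) = 0) (Sum.inl i)
        have : (W₁dag * W₁) *ᵥ v = 0 := by rw [← mulVec_mulVec, h1, mulVec_zero]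
        rwa [hleft, one_mulVec] at this
      set y := P *ᵥ x with hydef
      have hy0 : y ≠ 0 := by
        intro h
        exact hx0 (by rw [← hQPvec x, ← hydef, h, mulVec_zero])
      have horth : ∀ u ∈ U, u ⬝ᵥ Q *ᵥ y = 0 := by
        rintro u ⟨w, rfl⟩
        rw [mulVecLin_apply, hydef, hQPvec, hDvec, hxelim]
        have : (A *ᵥ w) ⬝ᵥ (W₁ *ᵥ v) = w ⬝ᵥ (W₂ *ᵥ v) := by
          rw [hAdef, ← vecMul_transpose, ← dotProduct_mulVec, transpose_transpose,
            mulVec_mulVec, Matrix.mul_assoc, hleft, Matrix.mul_one]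
        rw [sumElim_dotProduct_sumElim, this, neg_dotProduct, add_neg_cancel]
      have hkey := key_dual Q hQsymm U V hdim hU hV y hy0 horth
      rw [hydef, hQPvec, dotProduct_comm] at hkey
      have hgoal : v ⬝ᵥ (Sᵀ * P * S) *ᵥ v = x ⬝ᵥ P *ᵥ x := by
        rw [← mulVec_mulVec, ← mulVec_mulVec, dotProduct_mulVec v, vecMul_transpose, ← hxdef]
      rw [neg_mulVec, dotProduct_neg, hgoal]
      linarith
  · rw [posDef_iff_dotProduct_mulVec]; constructor
    · rw [Matrix.IsHermitian]
      ext i j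
      simp only [conjTranspose_apply, star_trivial, toBlocks₂₂, of_apply]
      have := congrFun (congrFun hPsymm.eq (Sum.inr i)) (Sum.inr j)
      rw [transpose_apply] at this
      exact this
    · intro w hw
      rw [show star w = w from star_trivial w]
      set x : Fin n ⊕ Fin m → ℝ := Sum.elim 0 w with hxdef
      have hx0 : x ≠ 0 := by
        intro h
        exact hw (funext fun j => by simpa [hxdef] using congrFun h (Sum.inr j))
      set y := P *ᵥ x with hydef
      have hy0 : y ≠ 0 := by
        intro h
        exact hx0 (by rw [← hQPvec x, ← hydef, h, mulVec_zero])
      have hQsymm' : (-Q)ᵀ = -Q := by rw [transpose_neg, hQsymm]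
      have hdim' : Fintype.card (Fin n ⊕ Fin m)
          ≤ Module.finrank ℝ V + Module.finrank ℝ U := by
        rw [hUrank, hVrank]; simp
      have hV' : ∀ v ∈ V, v ≠ 0 → 0 < v ⬝ᵥ (-Q) *ᵥ v := by
        intro v hvV hv0
        have := hV v hvV hv0
        rw [neg_mulVec, dotProduct_neg]
        linarith
      have hU' : ∀ u ∈ U, u ≠ 0 → u ⬝ᵥ (-Q) *ᵥ u < 0 := by
        intro u huU hu0
        have := hU u huU hu0
        rw [neg_mulVec, dotProduct_neg]
        linarith
      have horth' : ∀ v ∈ V, v ⬝ᵥ (-Q) *ᵥ y = 0 := by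
        rintro v ⟨a, rfl⟩
        rw [mulVecLin_apply, hEvec, neg_mulVec, hydef, hQPvec, dotProduct_neg, hxdef,
          sumElim_dotProduct_sumElim]
        simp
      have hkey := key_dual (-Q) hQsymm' V U hdim' hV' hU' y hy0 horth'
      rw [neg_mulVec, dotProduct_neg, hydef, hQPvec, dotProduct_comm] at hkey
      have hgoal : x ⬝ᵥ P *ᵥ x = w ⬝ᵥ P.toBlocks₂₂ *ᵥ w := by
        simp [hxdef, dotProduct, mulVec, Fintype.sum_sum_type, toBlocks₂₂]
      rw [← hgoal]
      linarith
end

section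
/- Let a, d be natural numbers and let Q and M be symmetric real (a+d)×(a+d) matrices. Let S ⊆ ℝᵃ × ℝᵈ be a set such that every (v,w) ∈ S satisfies (v,w)ᵀM(v,w) ≥ 0, where (v,w) denotes the concatenated vector in ℝ^{a+d}. Write Q̄ := Q + M as a block matrix with blocks Ā (a×a), B̄ (a×d), B̄ᵀ and C̄ (d×d). If C̄ is negative definite, then for every (v,w) ∈ S: (v,w)ᵀQ(v,w) ≤ vᵀ(Ā − B̄C̄⁻¹B̄ᵀ)v. -/
open Matrix

/-- Combination of the S-procedure relaxation (8)–(9) with the analytic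
maximization (10)–(11): with `Q̄ = Q + M = [Ā B̄; B̄ᵀ C̄]` and `C̄ ≺ 0`, the
quadratic form of `Q` over the admissible set `S` is overestimated by the
Schur complement `vᵀ(Ā - B̄C̄⁻¹B̄ᵀ)v`. -/
theorem sproc_schur_overestimate
    (a d : ℕ)
    (Q M : Matrix (Fin a ⊕ Fin d) (Fin a ⊕ Fin d) ℝ)
    (hQ : Q.IsSymm) (hM : M.IsSymm)
    (S : Set ((Fin a → ℝ) × (Fin d → ℝ)))
    (hS : ∀ p ∈ S, 0 ≤ Sum.elim p.1 p.2 ⬝ᵥ M.mulVec (Sum.elim p.1 p.2))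
    (hC : (-((Q + M).toBlocks₂₂)).PosDef) :
    ∀ p ∈ S,
      Sum.elim p.1 p.2 ⬝ᵥ Q.mulVec (Sum.elim p.1 p.2) ≤
        p.1 ⬝ᵥ ((Q + M).toBlocks₁₁ -
          (Q + M).toBlocks₁₂ * ((Q + M).toBlocks₂₂)⁻¹ *
            ((Q + M).toBlocks₁₂)ᵀ).mulVec p.1 := by
  intro p hp
  set Qb := Q + M with hQb
  have hsym : Qb.IsSymm := hQ.add hM
  set A := Qb.toBlocks₁₁
  set B := Qb.toBlocks₁₂
  set C := Qb.toBlocks₂₂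
  have hCsym : C.IsHermitian := by
    have := hC.isHermitian
    simpa [Matrix.IsHermitian] using congrArg Neg.neg this
  have hCinv : Invertible C := by
    have hdet : (-C).det ≠ 0 := ne_of_gt hC.det_pos
    have : C.det ≠ 0 := by
      intro h
      apply hdet
      rw [Matrix.det_neg, h, mul_zero]
    exact Matrix.invertibleOfIsUnitDet _ (isUnit_iff_ne_zero.mpr this)
  have h21 : Qb.toBlocks₂₁ = Bᵀ := by
    ext i j
    have := congrFun (congrFun hsym (Sum.inl j)) (Sum.inr i)
    simpa [Matrix.toBlocks₂₁, Matrix.toBlocks₁₂, Matrix.transpose_apply, B] using this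
  have hfb : Matrix.fromBlocks A B Bᵀ C = Qb := by
    rw [← h21]; exact Matrix.fromBlocks_toBlocks Qb
  set x := p.1
  set y := p.2
  have key : (star (Sum.elim x y)) ᵥ* (Matrix.fromBlocks A B Bᴴ C) ⬝ᵥ (Sum.elim x y) =
      (star ((C⁻¹ * Bᴴ) *ᵥ x + y)) ᵥ* C ⬝ᵥ ((C⁻¹ * Bᴴ) *ᵥ x + y) +
        (star x) ᵥ* (A - B * C⁻¹ * Bᴴ) ⬝ᵥ x :=
    Matrix.schur_complement_eq₂₂ A B x y hCsym
  have hBH : Bᴴ = Bᵀ := by ext i j; simp [Matrix.conjTranspose_apply]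
  have hstar : ∀ {α : Type} (z : α → ℝ), star z = z := fun z => funext fun i => rfl
  rw [hBH, hstar, hstar, hstar, hfb] at key
  have hQbq : Sum.elim x y ⬝ᵥ Qb.mulVec (Sum.elim x y) =
      ((C⁻¹ * Bᵀ) *ᵥ x + y) ⬝ᵥ C.mulVec ((C⁻¹ * Bᵀ) *ᵥ x + y) +
        x ⬝ᵥ (A - B * C⁻¹ * Bᵀ).mulVec x := by
    rw [Matrix.dotProduct_mulVec, key, ← Matrix.dotProduct_mulVec, ← Matrix.dotProduct_mulVec]
  have hQle : Sum.elim x y ⬝ᵥ Q.mulVec (Sum.elim x y) ≤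
      Sum.elim x y ⬝ᵥ Qb.mulVec (Sum.elim x y) := by
    have := hS p hp
    rw [hQb]
    simp only [Matrix.add_mulVec, dotProduct_add]
    linarith
  have hneg : ((C⁻¹ * Bᵀ) *ᵥ x + y) ⬝ᵥ C.mulVec ((C⁻¹ * Bᵀ) *ᵥ x + y) ≤ 0 := by
    set z := (C⁻¹ * Bᵀ) *ᵥ x + y
    rcases eq_or_ne z 0 with hz | hz
    · simp [hz]
    · have := hC.dotProduct_mulVec_pos hz
      have h' : z ⬝ᵥ (-C).mulVec z = - (z ⬝ᵥ C.mulVec z) := by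
        simp [Matrix.neg_mulVec]
      rw [hstar z, h'] at this
      linarith
  calc Sum.elim x y ⬝ᵥ Q.mulVec (Sum.elim x y)
      ≤ Sum.elim x y ⬝ᵥ Qb.mulVec (Sum.elim x y) := hQle
    _ ≤ x ⬝ᵥ (A - B * C⁻¹ * Bᵀ).mulVec x := by rw [hQbq]; linarith
end

section
/- (Backward step of Theorem 1, Robust DDP.) Let Q and M be symmetric (1+n+m+d)×(1+n+m+d) real matrices, P a symmetric (1+n)×(1+n) real matrix, k¹ ∈ ℝᵐ, and K² a real m×n matrix. Assume: (i) for all x ∈ ℝⁿ, u ∈ ℝᵐ, w ∈ ℝᵈ: f0(x,u) + Vnext(f(x,u,w)) ≤ ξ(x,u,w)ᵀ Q ξ(x,u,w), where Vnext : ℝⁿ → ℝ is a given function; (ii) for all x, u, w with w ∈ C(g(x,u,w)): ξ(x,u,w)ᵀ M ξ(x,u,w) ≥ 0; (iii) the (1+n+d)×(1+n+d) matrix E(k¹,K²)ᵀ (Q + M − P̂) E(k¹,K²) is negative definite. Define the affine policy π̃(x) := u_r + k¹ + K²(x − x_r) and the quadratic function Ṽ(x) := η(x)ᵀ P η(x).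 Then for every x ∈ ℝⁿ and every w ∈ ℝᵈ with w ∈ C(g(x, π̃(x), w)): f0(x, π̃(x)) + Vnext(f(x, π̃(x), w)) ≤ Ṽ(x). -/
open Matrix

/-- Index type for the vector `ξ = (1, δx, δu, δw)` of size `1+n+m+d`. -/
abbrev XiIdx (n m d : ℕ) := Unit ⊕ (Fin n ⊕ (Fin m ⊕ Fin d))

/-- Index type for the vector `η = (1, δx)` of size `1+n`. -/
abbrev EtaIdx (n : ℕ) := Unit ⊕ Fin n

/-- Index type for `(τ, a, b) ∈ ℝ × ℝⁿ × ℝᵈ` of size `1+n+d`. -/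
abbrev TabIdx (n d : ℕ) := Unit ⊕ (Fin n ⊕ Fin d)

/-- The vector `ξ(x,u,w) = (1, x - x_r, u - u_r, w - w_r)`. -/
def xiVec {n m d : ℕ} (xr : Fin n → ℝ) (ur : Fin m → ℝ) (wr : Fin d → ℝ)
    (x : Fin n → ℝ) (u : Fin m → ℝ) (w : Fin d → ℝ) : XiIdx n m d → ℝ :=
  Sum.elim (fun _ => 1) (Sum.elim (x - xr) (Sum.elim (u - ur) (w - wr)))

/-- The vector `η(x) = (1, x - x_r)`. -/
def etaVec {n : ℕ} (xr : Fin n → ℝ) (x : Fin n → ℝ) : EtaIdx n → ℝ :=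
  Sum.elim (fun _ => 1) (x - xr)

/-- The `(1+n+m+d)×(1+n+d)` matrix `E(k¹,K²)` mapping `(τ,a,b)` to
`(τ, a, τ·k¹ + K²a, b)`. -/
def Emat {n m d : ℕ} (k1 : Fin m → ℝ) (K2 : Matrix (Fin m) (Fin n) ℝ) :
    Matrix (XiIdx n m d) (TabIdx n d) ℝ :=
  Matrix.of fun i j =>
    match i, j with
    | Sum.inl _, Sum.inl _ => 1
    | Sum.inl _, Sum.inr _ => 0
    | Sum.inr (Sum.inl p), Sum.inr (Sum.inl q) => if p = q then (1 : ℝ) else 0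
    | Sum.inr (Sum.inl _), _ => 0
    | Sum.inr (Sum.inr (Sum.inl p)), Sum.inl _ => k1 p
    | Sum.inr (Sum.inr (Sum.inl p)), Sum.inr (Sum.inl q) => K2 p q
    | Sum.inr (Sum.inr (Sum.inl _)), Sum.inr (Sum.inr _) => 0
    | Sum.inr (Sum.inr (Sum.inr p)), Sum.inr (Sum.inr q) => if p = q then (1 : ℝ) else 0
    | Sum.inr (Sum.inr (Sum.inr _)), _ => 0

/-- The injection matrix of the leading principal `(1+n)` block into `1+n+m+d`. -/
def Jmat {n m d : ℕ} : Matrix (XiIdx n m d) (EtaIdx n) ℝ :=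
  Matrix.of fun i j =>
    match i, j with
    | Sum.inl _, Sum.inl _ => 1
    | Sum.inr (Sum.inl p), Sum.inr q => if p = q then (1 : ℝ) else 0
    | _, _ => 0

/-- `P̂`: the `(1+n+m+d)×(1+n+m+d)` matrix with `P` as its leading principal
`(1+n)×(1+n)` block and all other entries zero. -/
def Phat {n m d : ℕ} (P : Matrix (EtaIdx n) (EtaIdx n) ℝ) :
    Matrix (XiIdx n m d) (XiIdx n m d) ℝ :=
  (Jmat (n := n) (m := m) (d := d)) * P * (Jmat (n := n) (m := m) (d := d))ᵀ

/-- **Backward step of Theorem 1 (Robust DDP).** -/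
theorem robust_ddp_backward_step
    (n m d l : ℕ)
    (f : (Fin n → ℝ) → (Fin m → ℝ) → (Fin d → ℝ) → (Fin n → ℝ))
    (g : (Fin n → ℝ) → (Fin m → ℝ) → (Fin d → ℝ) → (Fin l → ℝ))
    (f0 : (Fin n → ℝ) → (Fin m → ℝ) → ℝ)
    (C : (Fin l → ℝ) → Set (Fin d → ℝ))
    (Vnext : (Fin n → ℝ) → ℝ)
    (xr : Fin n → ℝ) (ur : Fin m → ℝ) (wr : Fin d → ℝ)
    (Q M : Matrix (XiIdx n m d) (XiIdx n m d) ℝ)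
    (hQsymm : Q.IsSymm) (hMsymm : M.IsSymm)
    (P : Matrix (EtaIdx n) (EtaIdx n) ℝ) (hPsymm : P.IsSymm)
    (k1 : Fin m → ℝ) (K2 : Matrix (Fin m) (Fin n) ℝ)
    (h1 : ∀ (x : Fin n → ℝ) (u : Fin m → ℝ) (w : Fin d → ℝ),
      f0 x u + Vnext (f x u w) ≤
        xiVec xr ur wr x u w ⬝ᵥ Q.mulVec (xiVec xr ur wr x u w))
    (h2 : ∀ (x : Fin n → ℝ) (u : Fin m → ℝ) (w : Fin d → ℝ), w ∈ C (g x u w) →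
      0 ≤ xiVec xr ur wr x u w ⬝ᵥ M.mulVec (xiVec xr ur wr x u w))
    (h3 : (-((Emat (n := n) (m := m) (d := d) k1 K2)ᵀ * (Q + M - Phat P) * Emat (n := n) (m := m) (d := d) k1 K2)).PosDef) :
    ∀ (x : Fin n → ℝ) (w : Fin d → ℝ),
      w ∈ C (g x (ur + k1 + K2.mulVec (x - xr)) w) →
      f0 x (ur + k1 + K2.mulVec (x - xr)) +
          Vnext (f x (ur + k1 + K2.mulVec (x - xr)) w) ≤
        etaVec xr x ⬝ᵥ P.mulVec (etaVec xr x) := by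
  
  intro x w hw
  set u : Fin m → ℝ := ur + k1 + K2.mulVec (x - xr) with hu
  set ξ : XiIdx n m d → ℝ := xiVec xr ur wr x u w with hξ
  set z : TabIdx n d → ℝ :=
    Sum.elim (fun _ => (1 : ℝ)) (Sum.elim (x - xr) (w - wr)) with hz
  have hEz : (Emat (n := n) (m := m) (d := d) k1 K2).mulVec z = ξ := by
    funext i
    rcases i with _ | (p | (p | p)) <;>
      simp [Matrix.mulVec, dotProduct, Fintype.sum_sum_type, Emat, hz, hξ,
        xiVec, hu, ite_mul, Finset.sum_ite_eq, Pi.add_apply, Pi.sub_apply,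
        Matrix.mulVec] <;> ring
  have hJ : (Jmat (n := n) (m := m) (d := d))ᵀ.mulVec ξ = etaVec xr x := by
    funext i
    rcases i with _ | p <;>
      simp [Matrix.mulVec, dotProduct, Fintype.sum_sum_type, Jmat, hξ,
        xiVec, etaVec, ite_mul, Finset.sum_ite_eq', Matrix.transpose_apply]
  have hznz : z ≠ 0 := by
    intro h
    have : z (Sum.inl ()) = 0 := by rw [h]; rfl
    simp [hz] at this
  have hneg := h3.dotProduct_mulVec_pos hznz
  have key : ξ ⬝ᵥ (Q + M - Phat P).mulVec ξ < 0 := by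
    have this1 : 0 < z ⬝ᵥ (-((Emat (n := n) (m := m) (d := d) k1 K2)ᵀ *
        (Q + M - Phat P) * Emat (n := n) (m := m) (d := d) k1 K2)).mulVec z := by
      simpa using hneg
    have heq : z ⬝ᵥ ((Emat (n := n) (m := m) (d := d) k1 K2)ᵀ *
        (Q + M - Phat P) * Emat (n := n) (m := m) (d := d) k1 K2).mulVec z
        = ξ ⬝ᵥ (Q + M - Phat P).mulVec ξ := by
      rw [Matrix.dotProduct_mulVec, ← Matrix.vecMul_vecMul, ← Matrix.vecMul_vecMul,
        Matrix.vecMul_transpose, hEz, ← Matrix.dotProduct_mulVec, hEz,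
        ← Matrix.dotProduct_mulVec]
    rw [Matrix.neg_mulVec, dotProduct_neg] at this1
    linarith [heq ▸ this1]
  have hPhat : ξ ⬝ᵥ (Phat P).mulVec ξ = etaVec xr x ⬝ᵥ P.mulVec (etaVec xr x) := by
    rw [Phat, Matrix.mul_assoc, ← Matrix.mulVec_mulVec, ← Matrix.mulVec_mulVec, hJ,
      Matrix.dotProduct_mulVec, ← Matrix.mulVec_transpose, hJ]
  have hsub : ξ ⬝ᵥ (Q + M - Phat P).mulVec ξ
      = ξ ⬝ᵥ Q.mulVec ξ + ξ ⬝ᵥ M.mulVec ξ - ξ ⬝ᵥ (Phat P).mulVec ξ := by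
    simp [Matrix.sub_mulVec, Matrix.add_mulVec, dotProduct_sub,
      dotProduct_add]
  have h1' := h1 x u w
  have h2' := h2 x u w hw
  rw [hsub, hPhat] at key
  linarith
end
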